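/- Fix ε ≥ 0 and define κ_ε(s) := Φ(s/2 − ε/s) − e^ε Φ(−s/2 − ε/s) for s > 0, where Φ is the standard normal CDF. Then κ_ε is differentiable on (0,∞) with derivative κ_ε'(s) = (1/√(2π)) · e^{−(1/2)(s/2 − ε/s)²} for every s > 0; in particular κ_ε is strictly increasing on (0,∞). -/

import Mathlib

open MeasureTheory ProbabilityTheory Filter Matrix

/-- The Laplace measure `Lap(m, b)` on `ℝ`, given by density
`x ↦ (1/(2b)) exp(−|x − m|/b)` with respect to Lebesgue measure. -/
noncomputable def laplaceMeasure (m b : ℝ) : Measure ℝ :=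
  volume.withDensity fun x => ENNReal.ofReal ((1 / (2 * b)) * Real.exp (-|x - m| / b))

/-- `d` and `d'` are `μ`-adjacent: they differ in exactly one coordinate and
`‖d − d'‖₁ ≤ μ`. -/
def MuAdjacent {n : ℕ} (μ : ℝ) (d d' : Fin n → ℝ) : Prop :=
  (∃! i, d i ≠ d' i) ∧ ∑ i, |d i - d' i| ≤ μ

/-- The family of measures `M` indexed by `d ∈ ℝⁿ` preserves `(ε,δ)`-differential
privacy under `μ`-adjacency. -/
def PreservesDP {n : ℕ} {Ω : Type*} [MeasurableSpace Ω] (μ ε δ : ℝ)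
    (M : (Fin n → ℝ) → Measure Ω) : Prop :=
  ∀ d d' : Fin n → ℝ, MuAdjacent μ d d' → ∀ S : Set Ω, MeasurableSet S →
    M d S ≤ ENNReal.ofReal (Real.exp ε) * M d' S + ENNReal.ofReal δ

/-- Assumption 1: `L` is the Laplacian of an undirected connected weighted graph with
weights `w`, with `w_{ii} = 0`, `w_{ij} = w_{ji} ≥ 0`, and `∑_j w_{ij} < 1`. -/
structure IsGraphLaplacian {n : ℕ} (L : Matrix (Fin n) (Fin n) ℝ)
    (w : Fin n → Fin n → ℝ) : Prop where
  symm : ∀ i j, w i j = w j i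
  nonneg : ∀ i j, 0 ≤ w i j
  diag_zero : ∀ i, w i i = 0
  row_sum_lt_one : ∀ i, ∑ j, w i j < 1
  connected : ∀ i j : Fin n, Relation.ReflTransGen (fun a b => 0 < w a b) i j
  off_diag : ∀ i j, i ≠ j → L i j = -(w i j)
  diag : ∀ i, L i i = ∑ k, w i k

/-- Euclidean norm on `ℝⁿ` (as functions `Fin n → ℝ`). -/
noncomputable def euclNorm {n : ℕ} (v : Fin n → ℝ) : ℝ := Real.sqrt (∑ i, v i ^ 2)

/-- The standard normal CDF `Φ`. -/
noncomputable def stdNormalCDF (s : ℝ) : ℝ :=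
  (Real.sqrt (2 * Real.pi))⁻¹ * ∫ τ in Set.Iic s, Real.exp (-τ ^ 2 / 2)

/-- `κ_ε(s) = Φ(s/2 − ε/s) − e^ε Φ(−s/2 − ε/s)`. -/
noncomputable def kappaDP (ε s : ℝ) : ℝ :=
  stdNormalCDF (s / 2 - ε / s) - Real.exp ε * stdNormalCDF (-(s / 2) - ε / s)


private lemma gauss_integrable' : MeasureTheory.Integrable (fun τ : ℝ => Real.exp (-τ ^ 2 / 2)) := by
  have h := integrable_exp_neg_mul_sq (b := (1/2 : ℝ)) (by norm_num)
  convert h using 2 with x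
  ring_nf

private lemma hasDerivAt_stdNormalCDF' (s : ℝ) :
    HasDerivAt stdNormalCDF ((Real.sqrt (2 * Real.pi))⁻¹ * Real.exp (-s ^ 2 / 2)) s := by
  have hInt := gauss_integrable'
  have key : ∀ t : ℝ, stdNormalCDF t =
      (Real.sqrt (2 * Real.pi))⁻¹ * ((∫ τ in Set.Iic (0:ℝ), Real.exp (-τ ^ 2 / 2))
        + ∫ τ in (0:ℝ)..t, Real.exp (-τ ^ 2 / 2)) := by
    intro t
    have := intervalIntegral.integral_Iic_sub_Iic hInt.integrableOn hInt.integrableOn (a := 0) (b := t)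
    unfold stdNormalCDF
    rw [← this]
    ring
  have hcont : Continuous fun τ : ℝ => Real.exp (-τ ^ 2 / 2) := by continuity
  have h1 : HasDerivAt (fun t => ∫ τ in (0:ℝ)..t, Real.exp (-τ ^ 2 / 2))
      (Real.exp (-s ^ 2 / 2)) s :=
    intervalIntegral.integral_hasDerivAt_right (hInt.intervalIntegrable)
      (hcont.stronglyMeasurableAtFilter _ _) hcont.continuousAt
  have h2 := ((h1.const_add (∫ τ in Set.Iic (0:ℝ), Real.exp (-τ ^ 2 / 2))).const_mul
      ((Real.sqrt (2 * Real.pi))⁻¹))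
  simpa [key] using h2.congr_of_eventuallyEq (Filter.Eventually.of_forall fun t => (key t))

private lemma kappa_deriv' (ε : ℝ) (s : ℝ) (hs : 0 < s) :
    HasDerivAt (fun s => kappaDP ε s)
      ((Real.sqrt (2 * Real.pi))⁻¹ * Real.exp (-(1 / 2) * (s / 2 - ε / s) ^ 2)) s := by
  have hs' := hs.ne'
  set c := (Real.sqrt (2 * Real.pi))⁻¹ with hc
  have hg : HasDerivAt (fun s : ℝ => s / 2 - ε / s) (1 / 2 + ε / s ^ 2) s := by
    have h1 : HasDerivAt (fun s : ℝ => s / 2) (1 / 2) s := by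
      simpa using (hasDerivAt_id s).div_const 2
    have h2 : HasDerivAt (fun s : ℝ => ε / s) (ε * (-(s ^ 2)⁻¹)) s := by
      simpa [div_eq_mul_inv] using (hasDerivAt_inv hs').const_mul ε
    have := h1.sub h2
    refine this.congr_deriv (Eq.symm ?_)
    field_simp; ring
  have hh : HasDerivAt (fun s : ℝ => -(s / 2) - ε / s) (-(1 / 2) + ε / s ^ 2) s := by
    have h1 : HasDerivAt (fun s : ℝ => -(s / 2)) (-(1 / 2)) s := by
      simpa using ((hasDerivAt_id s).div_const 2).fun_neg
    have h2 : HasDerivAt (fun s : ℝ => ε / s) (ε * (-(s ^ 2)⁻¹)) s := by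
      simpa [div_eq_mul_inv] using (hasDerivAt_inv hs').const_mul ε
    have := h1.sub h2
    refine this.congr_deriv (Eq.symm ?_)
    field_simp; ring
  have H1 := (hasDerivAt_stdNormalCDF' (s / 2 - ε / s)).comp s hg
  have H2 := ((hasDerivAt_stdNormalCDF' (-(s / 2) - ε / s)).comp s hh).const_mul (Real.exp ε)
  have H := H1.sub H2
  refine H.congr_deriv (Eq.symm ?_)
  have hexp : Real.exp ε * Real.exp (-(-(s / 2) - ε / s) ^ 2 / 2)
      = Real.exp (-(s / 2 - ε / s) ^ 2 / 2) := by
    rw [← Real.exp_add]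
    congr 1
    have : (-(s / 2) - ε / s) ^ 2 = (s / 2 - ε / s) ^ 2 + 2 * ε := by
      field_simp; ring
    rw [this]; ring
  have he : Real.exp (-(1 / 2) * (s / 2 - ε / s) ^ 2) = Real.exp (-(s / 2 - ε / s) ^ 2 / 2) := by
    congr 1; ring
  rw [he]
  linear_combination (c * (-(1 / 2) + ε / s ^ 2)) * hexp

/-- `κ_ε` is differentiable on `(0,∞)` with derivative
`(1/√(2π)) e^{−(1/2)(s/2 − ε/s)²}`, hence strictly increasing on `(0,∞)`. -/
theorem kappa_hasDerivAt_strictMono (ε : ℝ) (hε : 0 ≤ ε) :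
    (∀ s : ℝ, 0 < s →
      HasDerivAt (fun s => kappaDP ε s)
        ((Real.sqrt (2 * Real.pi))⁻¹ * Real.exp (-(1 / 2) * (s / 2 - ε / s) ^ 2)) s) ∧
    StrictMonoOn (kappaDP ε) (Set.Ioi 0) := by
  refine ⟨fun s hs => kappa_deriv' ε s hs, ?_⟩
  have hcont : ContinuousOn (kappaDP ε) (Set.Ioi 0) := fun x hx =>
    ((kappa_deriv' ε x hx).continuousAt).continuousWithinAt
  refine strictMonoOn_of_deriv_pos (convex_Ioi 0) hcont ?_
  intro x hx
  rw [interior_Ioi] at hx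
  rw [(kappa_deriv' ε x hx).deriv]
  have h2pi : (0:ℝ) < Real.sqrt (2 * Real.pi) :=
    Real.sqrt_pos.mpr (by positivity)
  positivity
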